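/- Let A, B be disjoint vertex sets of size x in a properly edge-coloured K_n, and let S ⊆ A, T ⊆ B be uniformly random subsets of size y each, chosen independently. Then the expected number of distinct colours appearing on edges between S and T is at least (1 - (y-1)^2/(x-1)) * y^2. -/

import Mathlib

def IsProperEdgeColoring {V C : Type*} (G : SimpleGraph V) (c : Sym2 V → C) : Prop :=
  ∀ e ∈ G.edgeSet, ∀ f ∈ G.edgeSet, e ≠ f → (∃ v, v ∈ e ∧ v ∈ f) → c e ≠ c f

open scoped Classical in
/-- The probability of the event `E` when each colour in `C` is included in a random
set of colours independently with probability `p`. -/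
noncomputable def colorProb {C : Type*} [Fintype C] (p : ℝ) (E : Finset C → Prop) : ℝ :=
  ∑ S : Finset C, if E S then p ^ S.card * (1 - p) ^ (Fintype.card C - S.card) else 0

/-- The number of edges of the random subgraph determined by the colour set `S`
between two (disjoint) vertex sets `A` and `B`. -/
def eG {n : ℕ} {C : Type*} [DecidableEq C] (c : Sym2 (Fin n) → C) (S : Finset C)
    (A B : Finset (Fin n)) : ℕ :=
  ((A ×ˢ B).filter fun ab => ab.1 ≠ ab.2 ∧ c s(ab.1, ab.2) ∈ S).card

/-- The degree of `v` in the random subgraph determined by the colour set `S`. -/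
def degS {n : ℕ} {C : Type*} [DecidableEq C] (c : Sym2 (Fin n) → C) (S : Finset C)
    (v : Fin n) : ℕ :=
  (Finset.univ.filter fun u => u ≠ v ∧ c s(v, u) ∈ S).card

/-- The number of distinct colours on edges between `A` and `B`. -/
def colorsBetween {n : ℕ} {C : Type*} [DecidableEq C] (c : Sym2 (Fin n) → C)
    (A B : Finset (Fin n)) : ℕ :=
  (((A ×ˢ B).filter fun ab => ab.1 ≠ ab.2).image fun ab => c s(ab.1, ab.2)).card

open Finset

lemma count_pair {α : Type*} [DecidableEq α] (A : Finset α) (y : ℕ) (a a' : α)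
    (ha : a ∈ A) (ha' : a' ∈ A) (hne : a ≠ a') :
    (((A.powersetCard (y+2)).filter fun S => a ∈ S ∧ a' ∈ S)).card
      = (((A.erase a).erase a').powersetCard y).card := by
  have hrec : ∀ S : Finset α, a ∈ S → a' ∈ S →
      insert a (insert a' ((S.erase a).erase a')) = S := by
    intro S haS ha'S
    rw [Finset.insert_erase (Finset.mem_erase.2 ⟨hne.symm, ha'S⟩), Finset.insert_erase haS]
  apply Finset.card_bij (fun S _ => (S.erase a).erase a')
  · intro S hS
    simp only [mem_filter, mem_powersetCard] at hS ⊢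
    obtain ⟨⟨hSA, hcard⟩, haS, ha'S⟩ := hS
    refine ⟨fun u hu => ?_, ?_⟩
    · simp only [mem_erase] at hu ⊢
      exact ⟨hu.1, hu.2.1, hSA hu.2.2⟩
    · rw [Finset.card_erase_of_mem (Finset.mem_erase.2 ⟨hne.symm, ha'S⟩),
        Finset.card_erase_of_mem haS, hcard]
      omega
  · intro S hS S' hS' h
    simp only [mem_filter, mem_powersetCard] at hS hS'
    rw [← hrec S hS.2.1 hS.2.2, ← hrec S' hS'.2.1 hS'.2.2, h]
  · intro S' hS'
    simp only [mem_powersetCard] at hS'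
    obtain ⟨hsub, hcard⟩ := hS'
    have hha : a ∉ insert a' S' := by
      simp only [mem_insert]
      rintro (rfl | h)
      · exact hne rfl
      · exact (Finset.mem_erase.1 ((Finset.erase_subset _ _) (hsub h))).1 rfl
    have hha' : a' ∉ S' := fun h => (Finset.mem_erase.1 (hsub h)).1 rfl
    refine ⟨insert a (insert a' S'), ?_, ?_⟩
    · simp only [mem_filter, mem_powersetCard]
      refine ⟨⟨?_, ?_⟩, by simp, by simp⟩
      · intro u hu
        simp only [mem_insert] at hu
        rcases hu with rfl | rfl | h
        · exact ha
        · exact ha'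
        · exact (Finset.erase_subset _ _) ((Finset.erase_subset _ _) (hsub h))
      · rw [Finset.card_insert_of_notMem hha, Finset.card_insert_of_notMem hha', hcard]
    · rw [Finset.erase_insert hha, Finset.erase_insert hha']

/-- Count of `(y+2)`-subsets of `A` containing two fixed distinct elements. -/
lemma count_pair' {α : Type*} [DecidableEq α] {A : Finset α} {w : ℕ} (hA : A.card = w + 2)
    (y : ℕ) {a a' : α} (ha : a ∈ A) (ha' : a' ∈ A) (hne : a ≠ a') :
    (((A.powersetCard (y+2)).filter fun S => a ∈ S ∧ a' ∈ S)).card = w.choose y := by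
  rw [count_pair A y a a' ha ha' hne, Finset.card_powersetCard,
    Finset.card_erase_of_mem (Finset.mem_erase.2 ⟨hne.symm, ha'⟩), Finset.card_erase_of_mem ha,
    hA]
  norm_num

lemma image_card_ge {α C : Type*} [DecidableEq α] [DecidableEq C] (P : Finset α) (f : α → C) :
    3 * (P.card : ℝ) - ∑ p ∈ P, ∑ q ∈ P, (if f p = f q then (1:ℝ) else 0)
      ≤ 2 * ((P.image f).card : ℝ) := by
  classical
  have hcard : (P.card : ℝ) = ∑ d ∈ P.image f, ((P.filter fun p => f p = d).card : ℝ) := by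
    rw [Finset.card_eq_sum_card_fiberwise (fun p hp => Finset.mem_image_of_mem f hp)]
    push_cast
    rfl
  have hW : ∑ p ∈ P, ∑ q ∈ P, (if f p = f q then (1:ℝ) else 0)
      = ∑ d ∈ P.image f, ((P.filter fun p => f p = d).card : ℝ)^2 := by
    rw [← Finset.sum_fiberwise_of_maps_to (fun p hp => Finset.mem_image_of_mem f hp)]
    refine Finset.sum_congr rfl fun d hd => ?_
    rw [sq]
    rw [Finset.sum_congr rfl (fun p hp => ?_), Finset.sum_const, nsmul_eq_mul]
    have hfp : f p = d := (Finset.mem_filter.1 hp).2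
    rw [Finset.sum_boole]
    have heq : (P.filter fun q => f p = f q) = (P.filter fun q => f q = d) :=
      Finset.filter_congr fun q hq => by simp [hfp, eq_comm]
    rw [heq]
  rw [hcard, hW, Finset.mul_sum, ← Finset.sum_sub_distrib]
  have h2 : 2 * ((P.image f).card : ℝ) = ∑ _d ∈ P.image f, (2:ℝ) := by
    rw [Finset.sum_const, nsmul_eq_mul]; ring
  rw [h2]
  apply Finset.sum_le_sum
  intro d hd
  have hm : 1 ≤ (P.filter fun p => f p = d).card := by
    obtain ⟨p, hp, hfp⟩ := Finset.mem_image.1 hd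
    exact Finset.card_pos.2 ⟨p, Finset.mem_filter.2 ⟨hp, hfp⟩⟩
  set m := (P.filter fun p => f p = d).card with hmdef
  rcases Nat.lt_or_ge m 2 with h | h
  · interval_cases m
    · norm_num
  · have : (2:ℝ) ≤ (m:ℝ) := by exact_mod_cast h
    nlinarith

lemma sum_pairs_swap {α : Type*} [DecidableEq α] (A : Finset α) (y : ℕ) (g : α → α → ℝ) :
    ∑ S ∈ A.powersetCard y, ∑ a ∈ S, ∑ a' ∈ S, g a a'
      = ∑ a ∈ A, ∑ a' ∈ A,
          (((A.powersetCard y).filter fun S => a ∈ S ∧ a' ∈ S).card : ℝ) * g a a' := by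
  have step : ∀ S ∈ A.powersetCard y, ∑ a ∈ S, ∑ a' ∈ S, g a a'
      = ∑ a ∈ A, ∑ a' ∈ A, (if a ∈ S ∧ a' ∈ S then g a a' else 0) := by
    intro S hS
    have hSA : S ⊆ A := (Finset.mem_powersetCard.1 hS).1
    have hfil : A.filter (· ∈ S) = S := by
      rw [Finset.filter_mem_eq_inter, Finset.inter_eq_right.2 hSA]
    calc ∑ a ∈ S, ∑ a' ∈ S, g a a'
        = ∑ a ∈ A.filter (· ∈ S), ∑ a' ∈ A.filter (· ∈ S), g a a' := by rw [hfil]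
      _ = ∑ a ∈ A, ∑ a' ∈ A, (if a ∈ S ∧ a' ∈ S then g a a' else 0) := by
          rw [Finset.sum_filter]
          refine Finset.sum_congr rfl fun a _ => ?_
          rw [Finset.sum_filter]
          by_cases h : a ∈ S
          · simp only [h, true_and, if_true]
          · simp only [h, false_and, if_false, Finset.sum_const_zero]
  rw [Finset.sum_congr rfl step, Finset.sum_comm]
  refine Finset.sum_congr rfl fun a _ => ?_
  rw [Finset.sum_comm]
  refine Finset.sum_congr rfl fun a' _ => ?_
  rw [← Finset.sum_filter, Finset.sum_const, nsmul_eq_mul]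

lemma proper_ne {n : ℕ} {C : Type*} {c : Sym2 (Fin n) → C}
    (hc : IsProperEdgeColoring (⊤ : SimpleGraph (Fin n)) c)
    {u v w : Fin n} (huv : u ≠ v) (huw : u ≠ w) (hvw : v ≠ w) :
    c s(u, v) ≠ c s(u, w) := by
  apply hc
  · simpa using huv
  · simpa using huw
  · intro h
    rw [Sym2.eq_iff] at h
    tauto
  · exact ⟨u, by simp, by simp⟩

lemma ind_split {n : ℕ} {C : Type*} [DecidableEq C] {c : Sym2 (Fin n) → C}
    (hc : IsProperEdgeColoring (⊤ : SimpleGraph (Fin n)) c)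
    {A B : Finset (Fin n)} (hAB : Disjoint A B)
    {a a' b b' : Fin n} (ha : a ∈ A) (ha' : a' ∈ A) (hb : b ∈ B) (hb' : b' ∈ B) :
    (if c s(a,b) = c s(a',b') then (1:ℝ) else 0)
      = (if a = a' ∧ b = b' then (1:ℝ) else 0)
        + (if a ≠ a' ∧ b ≠ b' ∧ c s(a,b) = c s(a',b') then (1:ℝ) else 0) := by
  have hab : a ≠ b := fun h => (Finset.disjoint_left.1 hAB ha) (h ▸ hb)
  have hab' : a ≠ b' := fun h => (Finset.disjoint_left.1 hAB ha) (h ▸ hb')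
  have ha'b : a' ≠ b := fun h => (Finset.disjoint_left.1 hAB ha') (h ▸ hb)
  by_cases h1 : a = a' <;> by_cases h2 : b = b'
  · subst h1; subst h2; simp
  · subst h1
    have hne : c s(a,b) ≠ c s(a,b') := proper_ne hc hab hab' h2
    simp [hne, h2]
  · subst h2
    have hne : c s(a,b) ≠ c s(a',b) := by
      have h := proper_ne hc (Ne.symm hab) (Ne.symm ha'b) h1
      rw [Sym2.eq_swap (a := b) (b := a), Sym2.eq_swap (a := b) (b := a')] at h
      exact h
    simp [hne, h1]
  · simp [h1, h2]

lemma coll_bound {n : ℕ} {C : Type*} [DecidableEq C] {c : Sym2 (Fin n) → C}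
    (hc : IsProperEdgeColoring (⊤ : SimpleGraph (Fin n)) c)
    {A B : Finset (Fin n)} (hAB : Disjoint A B) {a b : Fin n} (ha : a ∈ A) (hb : b ∈ B) :
    ((A ×ˢ B).filter fun p => a ≠ p.1 ∧ b ≠ p.2 ∧ c s(a,b) = c s(p.1,p.2)).card
      ≤ A.card - 1 := by
  have := Finset.card_erase_of_mem ha
  rw [← this]
  apply Finset.card_le_card_of_injOn (fun p => p.1)
  · intro p hp
    simp only [Finset.mem_coe, mem_filter, mem_product] at hp
    exact Finset.mem_erase.2 ⟨(hp.2.1).symm, hp.1.1⟩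
  · intro p hp q hq h
    simp only [Finset.mem_coe, mem_filter, mem_product] at hp hq
    have hp1B : p.1 ∉ B := Finset.disjoint_left.1 hAB hp.1.1
    have h12 : p.1 ≠ p.2 := fun h' => hp1B (h' ▸ hp.1.2)
    have h12' : p.1 ≠ q.2 := fun h' => hp1B (h' ▸ hq.1.2)
    have hcc : c s(p.1, p.2) = c s(p.1, q.2) := by
      have h' : p.1 = q.1 := h
      rw [← hp.2.2.2, hq.2.2.2, h']
    by_cases h2 : p.2 = q.2
    · exact Prod.ext h h2
    · exact absurd hcc (proper_ne hc h12 h12' h2)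



/-- For disjoint `x`-sets `A`, `B` in a properly coloured `K_n` and independent
uniformly random `y`-subsets `S ⊆ A`, `T ⊆ B`, the expected number of distinct
colours between `S` and `T` is at least `(1 - (y-1)²/(x-1)) y²`. -/
theorem stmt7 (n x y : ℕ) (hy : 0 < y) (hyx : y ≤ x)
    (C : Type*) [DecidableEq C] (c : Sym2 (Fin n) → C)
    (hc : IsProperEdgeColoring (⊤ : SimpleGraph (Fin n)) c)
    (A B : Finset (Fin n)) (hAB : Disjoint A B) (hA : A.card = x) (hB : B.card = x) :
    (1 - ((y : ℝ) - 1) ^ 2 / ((x : ℝ) - 1)) * (y : ℝ) ^ 2 ≤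
      (∑ S ∈ A.powersetCard y, ∑ T ∈ B.powersetCard y, (colorsBetween c S T : ℝ)) /
        ((x.choose y : ℝ) ^ 2) := by
  classical
  have hNpos : 0 < x.choose y := Nat.choose_pos hyx
  have hcardA : (A.powersetCard y).card = x.choose y := by rw [Finset.card_powersetCard, hA]
  have hcardB : (B.powersetCard y).card = x.choose y := by rw [Finset.card_powersetCard, hB]
  have hNR : (0:ℝ) < (x.choose y : ℝ) := by exact_mod_cast hNpos
  rcases Nat.lt_or_ge y 2 with hy1 | hy2
  · -- case y = 1
    have hy1' : y = 1 := by omega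
    subst hy1'
    have hterm : ∀ S ∈ A.powersetCard 1, ∀ T ∈ B.powersetCard 1,
        (1:ℝ) ≤ (colorsBetween c S T : ℝ) := by
      intro S hS T hT
      obtain ⟨hSA, hScard⟩ := Finset.mem_powersetCard.1 hS
      obtain ⟨hTB, hTcard⟩ := Finset.mem_powersetCard.1 hT
      obtain ⟨a, haS⟩ := Finset.card_pos.1 (show 0 < S.card by rw [hScard]; norm_num)
      obtain ⟨b, hbT⟩ := Finset.card_pos.1 (show 0 < T.card by rw [hTcard]; norm_num)
      have hne : a ≠ b := fun h => (Finset.disjoint_left.1 hAB (hSA haS)) (h ▸ hTB hbT)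
      have : 0 < colorsBetween c S T := by
        apply Finset.card_pos.2
        exact ⟨c s(a,b), Finset.mem_image.2 ⟨(a,b),
          Finset.mem_filter.2 ⟨Finset.mem_product.2 ⟨haS, hbT⟩, hne⟩, rfl⟩⟩
      exact_mod_cast this
    have hsum : ((x.choose 1 : ℝ))^2 ≤
        ∑ S ∈ A.powersetCard 1, ∑ T ∈ B.powersetCard 1, (colorsBetween c S T : ℝ) := by
      calc ((x.choose 1 : ℝ))^2
          = ∑ S ∈ A.powersetCard 1, ∑ _T ∈ B.powersetCard 1, (1:ℝ) := by
            rw [Finset.sum_const, Finset.sum_const, hcardA, hcardB]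
            simp [sq]
        _ ≤ _ := Finset.sum_le_sum fun S hS =>
            Finset.sum_le_sum fun T hT => hterm S hS T hT
    rw [le_div_iff₀ (by positivity)]
    refine le_trans ?_ hsum
    simp only [Nat.cast_one]
    norm_num
  · -- main case: y ≥ 2
    obtain ⟨w, rfl⟩ : ∃ w, x = w + 2 := ⟨x - 2, by omega⟩
    obtain ⟨z, rfl⟩ : ∃ z, y = z + 2 := ⟨y - 2, by omega⟩
    set f : Fin n × Fin n → C := fun p => c s(p.1, p.2) with hf
    set h : Fin n → Fin n → Fin n → Fin n → ℝ := fun a a' b b' =>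
      (if a ≠ a' ∧ b ≠ b' ∧ c s(a,b) = c s(a',b') then (1:ℝ) else 0) with hh
    -- Step 1: pointwise lower bound via image_card_ge
    have step_cb : ∀ S ∈ A.powersetCard (z+2), ∀ T ∈ B.powersetCard (z+2),
        3 * ((z+2:ℕ):ℝ)^2 - (∑ p ∈ S ×ˢ T, ∑ q ∈ S ×ˢ T, if f p = f q then (1:ℝ) else 0)
          ≤ 2 * (colorsBetween c S T : ℝ) := by
      intro S hS T hT
      obtain ⟨hSA, hScard⟩ := Finset.mem_powersetCard.1 hS
      obtain ⟨hTB, hTcard⟩ := Finset.mem_powersetCard.1 hT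
      have hST : (S ×ˢ T).filter (fun ab => ab.1 ≠ ab.2) = S ×ˢ T := by
        apply Finset.filter_true_of_mem
        intro p hp
        obtain ⟨h1, h2⟩ := Finset.mem_product.1 hp
        exact fun hp12 => (Finset.disjoint_left.1 hAB (hSA h1)) (hp12 ▸ hTB h2)
      have hcb : (colorsBetween c S T : ℝ) = (((S ×ˢ T).image f).card : ℝ) := by
        unfold colorsBetween
        rw [hST]
      have hcardST : ((S ×ˢ T).card : ℝ) = ((z+2:ℕ):ℝ)^2 := by
        rw [Finset.card_product, hScard, hTcard]
        push_cast
        ring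
      have := image_card_ge (S ×ˢ T) f
      rw [hcardST] at this
      linarith [this, hcb ▸ le_refl (2 * (colorsBetween c S T : ℝ))]
    -- Step 2: rewrite the collision sum
    have step_W : ∀ S ∈ A.powersetCard (z+2), ∀ T ∈ B.powersetCard (z+2),
        (∑ p ∈ S ×ˢ T, ∑ q ∈ S ×ˢ T, if f p = f q then (1:ℝ) else 0)
          = ((z+2:ℕ):ℝ)^2 + ∑ a ∈ S, ∑ a' ∈ S, ∑ b ∈ T, ∑ b' ∈ T, h a a' b b' := by
      intro S hS T hT
      obtain ⟨hSA, hScard⟩ := Finset.mem_powersetCard.1 hS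
      obtain ⟨hTB, hTcard⟩ := Finset.mem_powersetCard.1 hT
      have e1 : (∑ p ∈ S ×ˢ T, ∑ q ∈ S ×ˢ T, if f p = f q then (1:ℝ) else 0)
          = ∑ a ∈ S, ∑ a' ∈ S, ∑ b ∈ T, ∑ b' ∈ T,
              (if c s(a,b) = c s(a',b') then (1:ℝ) else 0) := by
        rw [Finset.sum_product]
        refine (Finset.sum_congr rfl fun a _ => ?_).trans (Finset.sum_congr rfl fun a _ =>
          Finset.sum_comm)
        refine Finset.sum_congr rfl fun b _ => ?_
        rw [Finset.sum_product]
      rw [e1]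
      have e2 : ∀ a ∈ S, ∀ a' ∈ S, ∀ b ∈ T, ∀ b' ∈ T,
          (if c s(a,b) = c s(a',b') then (1:ℝ) else 0)
            = (if a = a' ∧ b = b' then (1:ℝ) else 0) + h a a' b b' :=
        fun a ha a' ha' b hb b' hb' =>
          ind_split hc hAB (hSA ha) (hSA ha') (hTB hb) (hTB hb')
      rw [Finset.sum_congr rfl fun a ha => Finset.sum_congr rfl fun a' ha' =>
        Finset.sum_congr rfl fun b hb => Finset.sum_congr rfl fun b' hb' =>
          e2 a ha a' ha' b hb b' hb']
      simp only [Finset.sum_add_distrib]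
      congr 1
      -- diagonal sum equals (z+2)^2
      have h1 : ∀ a a' : Fin n, ∑ b ∈ T, ∑ b' ∈ T, (if a = a' ∧ b = b' then (1:ℝ) else 0)
          = (if a = a' then (T.card : ℝ) else 0) := by
        intro a a'
        by_cases hh' : a = a'
        · simp only [hh', true_and, if_true]
          rw [Finset.sum_congr rfl fun b hb => ?_]
          · rw [Finset.sum_const, nsmul_eq_mul, mul_one]
          · rw [Finset.sum_ite_eq T b (fun _ => (1:ℝ)), if_pos hb]
        · simp [hh']
      rw [Finset.sum_congr rfl fun a _ => Finset.sum_congr rfl fun a' _ => h1 a a']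
      have h2 : ∀ a ∈ S, (∑ a' ∈ S, if a = a' then (T.card:ℝ) else 0) = (T.card : ℝ) := by
        intro a ha
        rw [Finset.sum_ite_eq S a (fun _ => (T.card:ℝ)), if_pos ha]
      rw [Finset.sum_congr rfl h2, Finset.sum_const, nsmul_eq_mul, hScard, hTcard]
      push_cast
      ring
    -- Step 3: double counting the collision quadruple sum
    have key : ∑ S ∈ A.powersetCard (z+2), ∑ T ∈ B.powersetCard (z+2),
          ∑ a ∈ S, ∑ a' ∈ S, ∑ b ∈ T, ∑ b' ∈ T, h a a' b b'
        = (w.choose z : ℝ)^2 *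
            ∑ a ∈ A, ∑ a' ∈ A, ∑ b ∈ B, ∑ b' ∈ B, h a a' b b' := by
      have hT : ∀ a a' : Fin n, ∑ T ∈ B.powersetCard (z+2), ∑ b ∈ T, ∑ b' ∈ T, h a a' b b'
          = (w.choose z : ℝ) * ∑ b ∈ B, ∑ b' ∈ B, h a a' b b' := by
        intro a a'
        rw [sum_pairs_swap B (z+2) (fun b b' => h a a' b b'), Finset.mul_sum]
        refine Finset.sum_congr rfl fun b hb => ?_
        rw [Finset.mul_sum]
        refine Finset.sum_congr rfl fun b' hb' => ?_
        by_cases hbb : b = b'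
        · subst hbb
          have hz : h a a' b b = 0 := if_neg (by tauto)
          rw [hz, mul_zero, mul_zero]
        · rw [count_pair' hB z hb hb' hbb]
      have hin : ∀ S : Finset (Fin n),
          ∑ T ∈ B.powersetCard (z+2), ∑ a ∈ S, ∑ a' ∈ S, ∑ b ∈ T, ∑ b' ∈ T, h a a' b b'
            = ∑ a ∈ S, ∑ a' ∈ S, (w.choose z : ℝ) * ∑ b ∈ B, ∑ b' ∈ B, h a a' b b' := by
        intro S
        rw [Finset.sum_comm]
        refine Finset.sum_congr rfl fun a _ => ?_
        rw [Finset.sum_comm]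
        exact Finset.sum_congr rfl fun a' _ => hT a a'
      rw [Finset.sum_congr rfl fun S _ => hin S,
        sum_pairs_swap A (z+2) (fun a a' => (w.choose z : ℝ) * ∑ b ∈ B, ∑ b' ∈ B, h a a' b b')]
      symm
      rw [Finset.mul_sum]
      refine Finset.sum_congr rfl fun a ha => ?_
      rw [Finset.mul_sum]
      refine Finset.sum_congr rfl fun a' ha' => ?_
      by_cases haa : a = a'
      · subst haa
        have hzero : ∑ b ∈ B, ∑ b' ∈ B, h a a b b' = 0 := by
          apply Finset.sum_eq_zero
          intro b _
          apply Finset.sum_eq_zero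
          intro b' _
          exact if_neg (by tauto)
        rw [hzero]
        ring
      · rw [count_pair' hA z ha ha' haa]
        ring
    -- Step 4: bound Q
    have hQ : ∑ a ∈ A, ∑ a' ∈ A, ∑ b ∈ B, ∑ b' ∈ B, h a a' b b'
        ≤ ((w+2:ℕ):ℝ)^2 * ((w+1:ℕ):ℝ) := by
      have hinner : ∀ a ∈ A, ∀ b ∈ B, ∑ a' ∈ A, ∑ b' ∈ B, h a a' b b' ≤ ((w+1:ℕ):ℝ) := by
        intro a ha b hb
        have e : ∑ a' ∈ A, ∑ b' ∈ B, h a a' b b'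
            = (((A ×ˢ B).filter fun p =>
                a ≠ p.1 ∧ b ≠ p.2 ∧ c s(a,b) = c s(p.1,p.2)).card : ℝ) := by
          symm
          calc (((A ×ˢ B).filter fun p =>
                a ≠ p.1 ∧ b ≠ p.2 ∧ c s(a,b) = c s(p.1,p.2)).card : ℝ)
              = ∑ p ∈ A ×ˢ B, (if a ≠ p.1 ∧ b ≠ p.2 ∧ c s(a,b) = c s(p.1,p.2)
                  then (1:ℝ) else 0) := by rw [Finset.sum_boole]
            _ = ∑ a' ∈ A, ∑ b' ∈ B, (if a ≠ a' ∧ b ≠ b' ∧ c s(a,b) = c s(a',b')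
                  then (1:ℝ) else 0) := by rw [Finset.sum_product]
            _ = ∑ a' ∈ A, ∑ b' ∈ B, h a a' b b' := rfl
        rw [e]
        have hb' := coll_bound hc hAB ha hb
        rw [hA] at hb'
        exact_mod_cast hb'
      calc ∑ a ∈ A, ∑ a' ∈ A, ∑ b ∈ B, ∑ b' ∈ B, h a a' b b'
          = ∑ a ∈ A, ∑ b ∈ B, ∑ a' ∈ A, ∑ b' ∈ B, h a a' b b' :=
            Finset.sum_congr rfl fun a _ => Finset.sum_comm
        _ ≤ ∑ _a ∈ A, ∑ _b ∈ B, ((w+1:ℕ):ℝ) :=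
            Finset.sum_le_sum fun a ha => Finset.sum_le_sum fun b hb => hinner a ha b hb
        _ = ((w+2:ℕ):ℝ)^2 * ((w+1:ℕ):ℝ) := by
            rw [Finset.sum_const, Finset.sum_const, hA, hB]
            push_cast
            ring
    -- Step 5: choose identity
    have hidN : (w+2) * ((w+1) * w.choose z) = (w+2).choose (z+2) * ((z+2) * (z+1)) := by
      have i1 : (w+1) * w.choose z = (w+1).choose (z+1) * (z+1) := Nat.add_one_mul_choose_eq w z
      have i2 : (w+2) * (w+1).choose (z+1) = (w+2).choose (z+2) * (z+2) :=
        Nat.add_one_mul_choose_eq (w+1) (z+1)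
      calc (w+2) * ((w+1) * w.choose z) = (w+2) * ((w+1).choose (z+1) * (z+1)) := by rw [i1]
        _ = ((w+2) * (w+1).choose (z+1)) * (z+1) := by ring
        _ = ((w+2).choose (z+2) * (z+2)) * (z+1) := by rw [i2]
        _ = _ := by ring
    -- Step 6: assemble
    set N : ℝ := ((w+2).choose (z+2) : ℝ) with hNdef
    set M : ℝ := (w.choose z : ℝ) with hMdef
    set Y : ℝ := ((z+2:ℕ):ℝ) with hYdef
    set X : ℝ := ((w+2:ℕ):ℝ) with hXdef
    have hWsum : ∑ S ∈ A.powersetCard (z+2), ∑ T ∈ B.powersetCard (z+2),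
          (∑ p ∈ S ×ˢ T, ∑ q ∈ S ×ˢ T, if f p = f q then (1:ℝ) else 0)
        = N^2 * Y^2 + M^2 * ∑ a ∈ A, ∑ a' ∈ A, ∑ b ∈ B, ∑ b' ∈ B, h a a' b b' := by
      rw [Finset.sum_congr rfl fun S hS => Finset.sum_congr rfl fun T hT => step_W S hS T hT]
      simp only [Finset.sum_add_distrib]
      rw [key]
      congr 1
      have hT : ∀ S ∈ A.powersetCard (z+2), (∑ _T ∈ B.powersetCard (z+2), Y^2)
          = N * Y^2 := by
        intro S _
        rw [Finset.sum_const, nsmul_eq_mul, hcardB, ← hNdef]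
      rw [Finset.sum_congr rfl hT, Finset.sum_const, nsmul_eq_mul, hcardA, ← hNdef]
      ring
    have hcb_sum : 3 * Y^2 * N^2
          - ∑ S ∈ A.powersetCard (z+2), ∑ T ∈ B.powersetCard (z+2),
              (∑ p ∈ S ×ˢ T, ∑ q ∈ S ×ˢ T, if f p = f q then (1:ℝ) else 0)
        ≤ 2 * ∑ S ∈ A.powersetCard (z+2), ∑ T ∈ B.powersetCard (z+2),
            (colorsBetween c S T : ℝ) := by
      have h1 : ∑ S ∈ A.powersetCard (z+2), ∑ T ∈ B.powersetCard (z+2),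
            (3 * Y^2 - (∑ p ∈ S ×ˢ T, ∑ q ∈ S ×ˢ T, if f p = f q then (1:ℝ) else 0))
          ≤ ∑ S ∈ A.powersetCard (z+2), ∑ T ∈ B.powersetCard (z+2),
              2 * (colorsBetween c S T : ℝ) :=
        Finset.sum_le_sum fun S hS => Finset.sum_le_sum fun T hT => step_cb S hS T hT
      have h2 : ∑ S ∈ A.powersetCard (z+2), ∑ T ∈ B.powersetCard (z+2),
            (3 * Y^2 - (∑ p ∈ S ×ˢ T, ∑ q ∈ S ×ˢ T, if f p = f q then (1:ℝ) else 0))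
          = 3 * Y^2 * N^2 - ∑ S ∈ A.powersetCard (z+2), ∑ T ∈ B.powersetCard (z+2),
              (∑ p ∈ S ×ˢ T, ∑ q ∈ S ×ˢ T, if f p = f q then (1:ℝ) else 0) := by
        rw [Finset.sum_congr rfl fun S _ => Finset.sum_sub_distrib _ _, Finset.sum_sub_distrib]
        congr 1
        have hT : ∀ S ∈ A.powersetCard (z+2), (∑ _T ∈ B.powersetCard (z+2), 3 * Y^2)
            = N * (3 * Y^2) := by
          intro S _
          rw [Finset.sum_const, nsmul_eq_mul, hcardB, ← hNdef]
        rw [Finset.sum_congr rfl hT, Finset.sum_const, nsmul_eq_mul, hcardA, ← hNdef]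
        ring
      have h3 : ∑ S ∈ A.powersetCard (z+2), ∑ T ∈ B.powersetCard (z+2),
            2 * (colorsBetween c S T : ℝ)
          = 2 * ∑ S ∈ A.powersetCard (z+2), ∑ T ∈ B.powersetCard (z+2),
              (colorsBetween c S T : ℝ) := by
        simp only [← Finset.mul_sum]
      rw [h2, h3] at h1
      exact h1
    -- real-number finish
    have hXpos : (0:ℝ) < X - 1 := by
      rw [hXdef]; push_cast; linarith
    have hNpos' : (0:ℝ) < N := by
      rw [hNdef]; exact_mod_cast Nat.choose_pos hyx
    have hid : X * (X - 1) * M = Y * (Y - 1) * N := by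
      rw [hXdef, hYdef, hNdef, hMdef]
      push_cast
      have := hidN
      have hcast : ((w+2) * ((w+1) * w.choose z) : ℝ) = ((w+2).choose (z+2) * ((z+2) * (z+1)) : ℝ) := by
        exact_mod_cast congrArg (Nat.cast : ℕ → ℝ) hidN
      push_cast at hcast
      nlinarith [hcast]
    have hM0 : (0:ℝ) ≤ M := by rw [hMdef]; positivity
    have hdiv : M^2 * (X^2 * (X-1)) / 2 ≤ (Y-1)^2 * Y^2 * N^2 / (X-1) := by
      rw [div_le_div_iff₀ (by norm_num : (0:ℝ) < 2) hXpos]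
      calc M^2 * (X^2 * (X-1)) * (X-1) = (X * (X-1) * M)^2 := by ring
        _ = (Y * (Y-1) * N)^2 := by rw [hid]
        _ = (Y-1)^2 * Y^2 * N^2 := by ring
        _ ≤ (Y-1)^2 * Y^2 * N^2 * 2 := by
            have h0 : (0:ℝ) ≤ (Y-1)^2 * Y^2 * N^2 := by positivity
            linarith
    rw [le_div_iff₀ (by positivity : (0:ℝ) < N^2)]
    have e : (1 - (Y - 1)^2 / (X - 1)) * Y^2 * N^2
        = Y^2 * N^2 - (Y-1)^2 * Y^2 * N^2 / (X-1) := by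
      field_simp
    have hQ' : M^2 * (∑ a ∈ A, ∑ a' ∈ A, ∑ b ∈ B, ∑ b' ∈ B, h a a' b b') ≤ M^2 * (X^2 * (X-1)) := by
      have hXX : ((w+2:ℕ):ℝ)^2 * ((w+1:ℕ):ℝ) = X^2 * (X-1) := by
        rw [hXdef]; push_cast; ring
      exact mul_le_mul_of_nonneg_left (hXX ▸ hQ) (sq_nonneg M)
    have hgoal : (1 - (Y - 1)^2 / (X - 1)) * Y^2 * N^2
        ≤ ∑ S ∈ A.powersetCard (z+2), ∑ T ∈ B.powersetCard (z+2), (colorsBetween c S T : ℝ) := by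
      rw [e]
      rw [hWsum] at hcb_sum
      linarith [hdiv, hQ', hcb_sum]
    calc (1 - (((z+2:ℕ):ℝ) - 1)^2 / (((w+2:ℕ):ℝ) - 1)) * ((z+2:ℕ):ℝ)^2 * N^2
        = (1 - (Y - 1)^2 / (X - 1)) * Y^2 * N^2 := by rw [hYdef, hXdef]
      _ ≤ _ := hgoal
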